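/- Unique fixed point for the bipartite model at high temperature (Remark 1.2 and the fixed-point assertion of Theorem 1.5, specialized as in Section 1.4, combined with the bound β⋆ ≥ 1/(2√2)). For every t ∈ [0, 1/16), every y = (y₁,y₂) ∈ [0,∞)² and every x = (x₁,x₂) ∈ ℝ², there exists exactly one z = (z₁,z₂) ∈ [0,∞)² such that z_i = E[tanh²(√(2(y_i + t z_{3−i})) η + x_i χ)] for i = 1, 2. (Equivalently, z is the unique solution in [0,∞)² of z = ∇_y φ(y + t(z₂,z₁); x).) -/

import Mathlib

noncomputable section

open MeasureTheory ProbabilityTheory Real Filter Topology ENNReal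

/-- the standard Gaussian measure on `ℝ` -/
def gauss : Measure ℝ := gaussianReal 0 1

/-- `E[tanh²(a η + x χ)]`, where `η` is standard Gaussian and `χ` is an independent
uniform `±1` random variable -/
def Etanh2 (a x : ℝ) : ℝ :=
  ((∫ u, tanh (a * u + x) ^ 2 ∂gauss) + ∫ u, tanh (a * u - x) ^ 2 ∂gauss) / 2

/-- `E[log cosh(a η + x χ)]` -/
def Elogcosh (a x : ℝ) : ℝ :=
  ((∫ u, log (cosh (a * u + x)) ∂gauss) + ∫ u, log (cosh (a * u - x)) ∂gauss) / 2

/-- `φ(y;x) = Σ_{i=1}^2 ( −E[log cosh(√(2 yᵢ) η + xᵢ χ)] + yᵢ )` -/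
def phiRS (y x : ℝ × ℝ) : ℝ :=
  (-Elogcosh (Real.sqrt (2 * y.1)) x.1 + y.1) + (-Elogcosh (Real.sqrt (2 * y.2)) x.2 + y.2)

/-- fixed point of the replica-symmetric equation at `(t,y,x)`:
`zᵢ = E[tanh²(√(2(yᵢ + t z_{3−i})) η + xᵢ χ)]` with `z ∈ [0,∞)²` -/
def IsFPy (t : ℝ) (y x z : ℝ × ℝ) : Prop :=
  0 ≤ z.1 ∧ 0 ≤ z.2 ∧
  z.1 = Etanh2 (Real.sqrt (2 * (y.1 + t * z.2))) x.1 ∧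
  z.2 = Etanh2 (Real.sqrt (2 * (y.2 + t * z.1))) x.2

/-- fixed point at `(t,x)` (i.e. at `y = 0`):
`zᵢ = E[tanh²(√(2 t z_{3−i}) η + xᵢ χ)]` with `z ∈ [0,∞)²` -/
def IsFP (t : ℝ) (x z : ℝ × ℝ) : Prop :=
  0 ≤ z.1 ∧ 0 ≤ z.2 ∧
  z.1 = Etanh2 (Real.sqrt (2 * (t * z.2))) x.1 ∧
  z.2 = Etanh2 (Real.sqrt (2 * (t * z.1))) x.2

/-- `𝔣(x) = φ(t(z^x₂, z^x₁); x) − t z^x₁ z^x₂`, given a selection `zf` of fixed points -/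
def frakf (t : ℝ) (zf : ℝ × ℝ → ℝ × ℝ) (x : ℝ × ℝ) : ℝ :=
  phiRS (t * (zf x).2, t * (zf x).1) x - t * (zf x).1 * (zf x).2

/-- spin value of a boolean -/
def sgn (b : Bool) : ℝ := if b then 1 else -1

/-- the mean magnetization `m_N(σ)` -/
def mN (χ1 χ2 : ℕ → ℝ) (N : ℕ) (σ : (Fin N → Bool) × (Fin N → Bool)) : ℝ × ℝ :=
  ((N : ℝ)⁻¹ * ∑ i : Fin N, χ1 i.val * sgn (σ.1 i),
   (N : ℝ)⁻¹ * ∑ i : Fin N, χ2 i.val * sgn (σ.2 i))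

/-- the bipartite Sherrington--Kirkpatrick Hamiltonian `H_N(σ)` -/
def HamN (β : ℝ) (W : ℕ → ℕ → ℝ) (N : ℕ) (σ : (Fin N → Bool) × (Fin N → Bool)) : ℝ :=
  (β / Real.sqrt N) * ∑ i : Fin N, ∑ j : Fin N, W i.val j.val * sgn (σ.1 i) * sgn (σ.2 j)

/-- free energy with Curie--Weiss-type interaction `G`:
`−(1/N) log( 4^{−N} Σ_σ exp( H_N(σ) + N G(m_N(σ)) ) )` -/
def freeEnergy (β : ℝ) (W : ℕ → ℕ → ℝ) (χ1 χ2 : ℕ → ℝ) (G : ℝ × ℝ → ℝ) (N : ℕ) : ℝ :=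
  -(N : ℝ)⁻¹ * Real.log (((4 : ℝ) ^ N)⁻¹ *
    ∑ σ : (Fin N → Bool) × (Fin N → Bool),
      Real.exp (HamN β W N σ + N * G (mN χ1 χ2 N σ)))

/-- the Gibbs probability `⟨1_{m_N ∈ A}⟩_N^G` -/
def gibbsProb (β : ℝ) (W : ℕ → ℕ → ℝ) (χ1 χ2 : ℕ → ℝ) (G : ℝ × ℝ → ℝ) (N : ℕ)
    (A : Set (ℝ × ℝ)) : ℝ :=
  (∑ σ : (Fin N → Bool) × (Fin N → Bool),
      A.indicator (fun _ => (1 : ℝ)) (mN χ1 χ2 N σ) *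
        Real.exp (HamN β W N σ + N * G (mN χ1 χ2 N σ))) /
    ∑ σ : (Fin N → Bool) × (Fin N → Bool),
      Real.exp (HamN β W N σ + N * G (mN χ1 χ2 N σ))

/-- the law of a centered `±1` Bernoulli random variable -/
def bern : Measure ℝ :=
  (2 : ℝ≥0∞)⁻¹ • Measure.dirac (1 : ℝ) + (2 : ℝ≥0∞)⁻¹ • Measure.dirac (-1 : ℝ)

/-- all the disorder random variables, as a single family -/
def allRV {Ω : Type*} (W : ℕ → ℕ → Ω → ℝ) (χ1 χ2 : ℕ → Ω → ℝ) :
    (ℕ × ℕ) ⊕ (ℕ ⊕ ℕ) → Ω → ℝ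
  | Sum.inl ij => W ij.1 ij.2
  | Sum.inr (Sum.inl i) => χ1 i
  | Sum.inr (Sum.inr i) => χ2 i

/-- the disorder hypotheses: `(W_{ij})` i.i.d. standard Gaussians, `(χ¹ᵢ)`, `(χ²ᵢ)` i.i.d.
uniform on `{−1,1}`, all mutually independent -/
def DisorderHyp {Ω : Type*} [MeasurableSpace Ω] (P : Measure Ω)
    (W : ℕ → ℕ → Ω → ℝ) (χ1 χ2 : ℕ → Ω → ℝ) : Prop :=
  (∀ i j : ℕ, Measurable (W i j)) ∧
  (∀ i j : ℕ, Measure.map (W i j) P = gaussianReal 0 1) ∧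
  (∀ i : ℕ, Measurable (χ1 i)) ∧ (∀ i : ℕ, Measure.map (χ1 i) P = bern) ∧
  (∀ i : ℕ, Measurable (χ2 i)) ∧ (∀ i : ℕ, Measure.map (χ2 i) P = bern) ∧
  iIndepFun (allRV W χ1 χ2) P

namespace UFP


/-- standard Gaussian density -/
def pg (u : ℝ) : ℝ := gaussianPDFReal 0 1 u

lemma pg_eq (u : ℝ) : pg u = (Real.sqrt (2 * π))⁻¹ * Real.exp (-(u ^ 2) / 2) := by
  simp [pg, gaussianPDFReal]

lemma pg_nonneg (u : ℝ) : 0 ≤ pg u := gaussianPDFReal_nonneg 0 1 u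

lemma continuous_pg : Continuous pg := by
  have : pg = fun u => (Real.sqrt (2 * π))⁻¹ * Real.exp (-(u ^ 2) / 2) := funext pg_eq
  rw [this]
  exact continuous_const.mul ((continuous_pow 2).neg.div_const 2).rexp

lemma integrable_pg : Integrable pg := integrable_gaussianPDFReal 0 1

lemma integral_pg : ∫ u, pg u = 1 := integral_gaussianPDFReal_eq_one 0 one_ne_zero

lemma hasDerivAt_pg (u : ℝ) : HasDerivAt pg (-u * pg u) u := by
  have : pg = fun u => (Real.sqrt (2 * π))⁻¹ * Real.exp (-(u ^ 2) / 2) := funext pg_eq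
  rw [this]
  have h1 : HasDerivAt (fun u : ℝ => -(u ^ 2) / 2) (-u) u := by
    have := ((hasDerivAt_pow 2 u).neg).div_const 2
    refine this.congr_deriv ?_; push_cast; ring
  have := (h1.exp).const_mul ((Real.sqrt (2 * π))⁻¹)
  refine this.congr_deriv ?_
  simp only; ring

lemma integrable_abs_mul_pg : Integrable (fun u : ℝ => |u| * pg u) := by
  have h := (integrable_mul_exp_neg_mul_sq (b := 1/2) (by norm_num)).abs
  have h2 := h.const_mul ((Real.sqrt (2 * π))⁻¹)
  refine h2.congr ?_
  filter_upwards with u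
  rw [pg_eq, abs_mul, abs_of_pos (Real.exp_pos _)]
  ring_nf

lemma integrable_bdd_mul_pg {g : ℝ → ℝ} (hg : Continuous g) {C : ℝ} (hC : ∀ u, |g u| ≤ C) :
    Integrable (fun u => pg u * g u) := by
  refine (integrable_pg.const_mul C).mono' (continuous_pg.mul hg).aestronglyMeasurable ?_
  filter_upwards with u
  rw [Real.norm_eq_abs, abs_mul, abs_of_nonneg (pg_nonneg u)]
  calc pg u * |g u| ≤ pg u * C := by
        exact mul_le_mul_of_nonneg_left (hC u) (pg_nonneg u)
    _ = C * pg u := mul_comm _ _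

lemma integrable_bdd_mul_id_mul_pg {g : ℝ → ℝ} (hg : Continuous g) {C : ℝ}
    (hC : ∀ u, |g u| ≤ C) : Integrable (fun u => pg u * (g u * u)) := by
  refine (integrable_abs_mul_pg.const_mul C).mono'
    (continuous_pg.mul (hg.mul continuous_id)).aestronglyMeasurable ?_
  filter_upwards with u
  rw [Real.norm_eq_abs, abs_mul, abs_of_nonneg (pg_nonneg u), abs_mul]
  calc pg u * (|g u| * |u|) ≤ pg u * (C * |u|) := by
        refine mul_le_mul_of_nonneg_left (mul_le_mul_of_nonneg_right (hC u) (abs_nonneg u)) (pg_nonneg u)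
    _ = C * (|u| * pg u) := by ring

lemma integral_gauss_eq (f : ℝ → ℝ) : ∫ u, f u ∂gauss = ∫ u, pg u * f u := by
  rw [show gauss = volume.withDensity (gaussianPDF 0 1) from gaussianReal_of_var_ne_zero 0 one_ne_zero]
  rw [gaussianPDF_def]
  have he : (fun x => ENNReal.ofReal (gaussianPDFReal 0 1 x))
      = (fun x => ((gaussianPDFReal 0 1 x).toNNReal : ENNReal)) := rfl
  rw [he, integral_withDensity_eq_integral_smul ((measurable_gaussianPDFReal 0 1).real_toNNReal)]
  congr 1; funext u
  simp only [NNReal.smul_def, smul_eq_mul]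
  rw [Real.coe_toNNReal _ (gaussianPDFReal_nonneg 0 1 u)]
  rfl

lemma tendsto_pg_atTop : Tendsto pg atTop (𝓝 0) := by
  have h1 : Tendsto (fun u : ℝ => u ^ 2) atTop atTop := tendsto_pow_atTop (by norm_num)
  have h2 : Tendsto (fun u : ℝ => -(u ^ 2) / 2) atTop atBot := by
    apply Tendsto.atBot_div_const (by norm_num : (0:ℝ) < 2)
    exact tendsto_neg_atTop_atBot.comp h1
  have h3 := Real.tendsto_exp_atBot.comp h2
  have h4 : Tendsto (fun u : ℝ => (Real.sqrt (2 * π))⁻¹ * Real.exp (-(u ^ 2) / 2)) atTop (𝓝 0) := by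
    simpa using h3.const_mul ((Real.sqrt (2 * π))⁻¹)
  exact h4.congr fun u => (pg_eq u).symm

lemma tendsto_pg_atBot : Tendsto pg atBot (𝓝 0) := by
  have := tendsto_pg_atTop.comp tendsto_neg_atBot_atTop
  refine this.congr fun u => ?_
  simp only [Function.comp_apply, pg_eq, neg_sq]



lemma tanh_sq_le_one (x : ℝ) : Real.tanh x ^ 2 ≤ 1 := by
  rw [Real.tanh_eq_sinh_div_cosh, div_pow, div_le_one (pow_pos (Real.cosh_pos x) 2)]
  nlinarith [Real.cosh_sq_sub_sinh_sq x]

lemma hasDerivAt_tanh (x : ℝ) : HasDerivAt Real.tanh (1 - Real.tanh x ^ 2) x := by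
  have h := (Real.hasDerivAt_sinh x).div (Real.hasDerivAt_cosh x) (Real.cosh_pos x).ne'
  have he : (fun y => Real.sinh y / Real.cosh y) = Real.tanh := by
    funext y; rw [Real.tanh_eq_sinh_div_cosh]
  rw [show (Real.sinh / Real.cosh) = Real.tanh from he] at h
  refine h.congr_deriv ?_
  rw [Real.tanh_eq_sinh_div_cosh]
  have hc := (Real.cosh_pos x).ne'
  field_simp

lemma continuous_tanh : Continuous Real.tanh := by
  have he : (fun y => Real.sinh y / Real.cosh y) = Real.tanh := by
    funext y; rw [Real.tanh_eq_sinh_div_cosh]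
  rw [← he]
  exact Real.continuous_sinh.div Real.continuous_cosh fun x => (Real.cosh_pos x).ne'

/-- derivative of `tanh²` -/
def k1 (w : ℝ) : ℝ := 2 * Real.tanh w * (1 - Real.tanh w ^ 2)

/-- second derivative of `tanh²` -/
def k2 (w : ℝ) : ℝ := 2 * (1 - Real.tanh w ^ 2) * (1 - 3 * Real.tanh w ^ 2)

lemma continuous_k1 : Continuous k1 := by
  unfold k1
  exact ((continuous_const.mul continuous_tanh).mul (continuous_const.sub (continuous_tanh.pow 2)))

lemma hasDerivAt_tanh_sq (w : ℝ) : HasDerivAt (fun w => Real.tanh w ^ 2) (k1 w) w := by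
  have := (hasDerivAt_tanh w).pow 2
  refine this.congr_deriv ?_
  unfold k1; ring

lemma hasDerivAt_k1 (w : ℝ) : HasDerivAt k1 (k2 w) w := by
  have h := ((hasDerivAt_tanh w).const_mul 2).mul ((hasDerivAt_const w (1:ℝ)).sub (hasDerivAt_tanh_sq w))
  refine h.congr_deriv ?_
  unfold k1 k2; simp only [Pi.sub_apply]; ring

lemma abs_k1_le (w : ℝ) : |k1 w| ≤ 2 := by
  have h1 := tanh_sq_le_one w
  have h2 := sq_nonneg (Real.tanh w)
  rw [abs_le]; constructor <;> [skip; skip] <;> unfold k1 <;>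
    nlinarith [sq_nonneg (Real.tanh w - 1), sq_nonneg (Real.tanh w + 1)]

lemma abs_k2_le (w : ℝ) : |k2 w| ≤ 2 := by
  have h1 := tanh_sq_le_one w
  have h2 := sq_nonneg (Real.tanh w)
  rw [abs_le]; constructor <;> unfold k2 <;>
    nlinarith [sq_nonneg (3 * Real.tanh w ^ 2 - 2)]


/-- the basic one-sided integral -/
def Hh (c a : ℝ) : ℝ := ∫ u, pg u * Real.tanh (a * u + c) ^ 2

lemma abs_tanh_sq_le_one (w : ℝ) : |Real.tanh w ^ 2| ≤ 1 := by
  rw [abs_of_nonneg (sq_nonneg _)]; exact tanh_sq_le_one w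

set_option maxHeartbeats 1000000 in
lemma hasDerivAt_Hh (c a₀ : ℝ) :
    HasDerivAt (Hh c) (∫ u, pg u * (k1 (a₀ * u + c) * u)) a₀ := by
  have hmeas : ∀ᶠ a in 𝓝 a₀, AEStronglyMeasurable
      (fun u : ℝ => pg u * Real.tanh (a * u + c) ^ 2) volume := by
    filter_upwards with a
    exact (continuous_pg.mul (((continuous_tanh.comp
      ((continuous_const.mul continuous_id).add continuous_const)).pow 2))).aestronglyMeasurable
  have hint : Integrable (fun u : ℝ => pg u * Real.tanh (a₀ * u + c) ^ 2) volume :=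
    integrable_bdd_mul_pg (((continuous_tanh.comp
      ((continuous_const.mul continuous_id).add continuous_const)).pow 2))
      (fun u => abs_tanh_sq_le_one _)
  have hmeas' : AEStronglyMeasurable (fun u : ℝ => pg u * (k1 (a₀ * u + c) * u)) volume :=
    (continuous_pg.mul ((continuous_k1.comp
      ((continuous_const.mul continuous_id).add continuous_const)).mul continuous_id)).aestronglyMeasurable
  have hbound : ∀ᵐ u : ℝ ∂volume, ∀ a ∈ Metric.ball a₀ 1,
      ‖pg u * (k1 (a * u + c) * u)‖ ≤ 2 * (|u| * pg u) := by
    filter_upwards with u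
    intro a _
    rw [Real.norm_eq_abs, abs_mul, abs_of_nonneg (pg_nonneg u), abs_mul]
    calc pg u * (|k1 (a * u + c)| * |u|) ≤ pg u * (2 * |u|) := by
          refine mul_le_mul_of_nonneg_left
            (mul_le_mul_of_nonneg_right (abs_k1_le _) (abs_nonneg u)) (pg_nonneg u)
      _ = 2 * (|u| * pg u) := by ring
  have hbint : Integrable (fun u : ℝ => 2 * (|u| * pg u)) volume :=
    integrable_abs_mul_pg.const_mul 2
  have hdiff : ∀ᵐ u : ℝ ∂volume, ∀ a ∈ Metric.ball a₀ 1,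
      HasDerivAt (fun a => pg u * Real.tanh (a * u + c) ^ 2) (pg u * (k1 (a * u + c) * u)) a := by
    filter_upwards with u
    intro a _
    have h1 : HasDerivAt (fun a : ℝ => a * u + c) u a := (hasDerivAt_mul_const u).add_const c
    have h2 := (hasDerivAt_tanh_sq (a * u + c)).comp a h1
    exact h2.const_mul (pg u)
  exact (hasDerivAt_integral_of_dominated_loc_of_deriv_le (Metric.ball_mem_nhds a₀ one_pos)
    hmeas hint hmeas' hbound hbint hdiff).2

lemma integral_ibp (c a : ℝ) :
    ∫ u, pg u * (k1 (a * u + c) * u) = a * ∫ u, pg u * k2 (a * u + c) := by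
  set Φ : ℝ → ℝ := fun u => -(k1 (a * u + c) * pg u) with hΦdef
  set ψ : ℝ → ℝ :=
    fun u => pg u * (k1 (a * u + c) * u) - a * (pg u * k2 (a * u + c)) with hψdef
  have hk1c : Continuous fun u => k1 (a * u + c) :=
    continuous_k1.comp ((continuous_const.mul continuous_id).add continuous_const)
  have hk2c : Continuous fun u => k2 (a * u + c) := by
    have hc : Continuous k2 := by
      unfold k2
      exact (continuous_const.mul (continuous_const.sub (continuous_tanh.pow 2))).mul
        (continuous_const.sub (continuous_const.mul (continuous_tanh.pow 2)))
    exact hc.comp ((continuous_const.mul continuous_id).add continuous_const)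
  have hint1 : Integrable (fun u => pg u * (k1 (a * u + c) * u)) :=
    integrable_bdd_mul_id_mul_pg hk1c (fun u => abs_k1_le _)
  have hint2 : Integrable (fun u => pg u * k2 (a * u + c)) :=
    integrable_bdd_mul_pg hk2c (fun u => abs_k2_le _)
  have hψint : Integrable ψ := hint1.sub (hint2.const_mul a)
  have hΦderiv : ∀ u : ℝ, HasDerivAt Φ (ψ u) u := by
    intro u
    have h1 : HasDerivAt (fun u : ℝ => a * u + c) a u := by
      simpa using ((hasDerivAt_id u).const_mul a).add_const c
    have h2 := ((hasDerivAt_k1 (a * u + c)).comp u h1).mul (hasDerivAt_pg u)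
    have h3 := h2.neg
    refine h3.congr_deriv ?_
    simp only [hψdef, Function.comp_def]; ring
  have habs : ∀ u : ℝ, ‖Φ u‖ ≤ 2 * pg u := by
    intro u
    rw [Real.norm_eq_abs, hΦdef]
    simp only [abs_neg, abs_mul, abs_of_nonneg (pg_nonneg u)]
    exact mul_le_mul_of_nonneg_right (abs_k1_le _) (pg_nonneg u)
  have hΦtop : Tendsto Φ atTop (𝓝 0) :=
    squeeze_zero_norm habs (by simpa using tendsto_pg_atTop.const_mul 2)
  have hΦbot : Tendsto Φ atBot (𝓝 0) :=
    squeeze_zero_norm habs (by simpa using tendsto_pg_atBot.const_mul 2)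
  have hIic : ∫ u in Set.Iic (0:ℝ), ψ u = Φ 0 - 0 :=
    MeasureTheory.integral_Iic_of_hasDerivAt_of_tendsto'
      (fun x _ => hΦderiv x) hψint.integrableOn hΦbot
  have hIoi : ∫ u in Set.Ioi (0:ℝ), ψ u = 0 - Φ 0 :=
    MeasureTheory.integral_Ioi_of_hasDerivAt_of_tendsto'
      (fun x _ => hΦderiv x) hψint.integrableOn hΦtop
  have hψ0 : ∫ u, ψ u = 0 := by
    rw [← intervalIntegral.integral_Iic_add_Ioi hψint.integrableOn hψint.integrableOn, hIic, hIoi]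
    ring
  have hsub := integral_sub hint1 (hint2.const_mul a)
  rw [hψdef] at hψ0
  rw [hsub] at hψ0
  rw [integral_const_mul] at hψ0
  linarith

lemma abs_deriv_Hh_le (c a : ℝ) : |∫ u, pg u * (k1 (a * u + c) * u)| ≤ 2 * |a| := by
  rw [integral_ibp, abs_mul]
  have hk2c : Continuous fun u => k2 (a * u + c) := by
    have hc : Continuous k2 := by
      unfold k2
      exact (continuous_const.mul (continuous_const.sub (continuous_tanh.pow 2))).mul
        (continuous_const.sub (continuous_const.mul (continuous_tanh.pow 2)))
    exact hc.comp ((continuous_const.mul continuous_id).add continuous_const)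
  have hint2 : Integrable (fun u => pg u * k2 (a * u + c)) :=
    integrable_bdd_mul_pg hk2c (fun u => abs_k2_le _)
  have h1 : |∫ u, pg u * k2 (a * u + c)| ≤ 2 := by
    calc |∫ u, pg u * k2 (a * u + c)| ≤ ∫ u, |pg u * k2 (a * u + c)| := by
          simpa [Real.norm_eq_abs, abs_mul] using
            MeasureTheory.norm_integral_le_integral_norm (μ := volume)
              (fun u => pg u * k2 (a * u + c))
      _ ≤ ∫ u, 2 * pg u := by
          refine integral_mono hint2.abs (integrable_pg.const_mul 2) fun u => ?_
          rw [abs_mul, abs_of_nonneg (pg_nonneg u)]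
          calc pg u * |k2 (a * u + c)| ≤ pg u * 2 :=
                mul_le_mul_of_nonneg_left (abs_k2_le _) (pg_nonneg u)
            _ = 2 * pg u := mul_comm _ _
      _ = 2 := by rw [integral_const_mul, integral_pg, mul_one]
  calc |a| * |∫ u, pg u * k2 (a * u + c)| ≤ |a| * 2 :=
        mul_le_mul_of_nonneg_left h1 (abs_nonneg a)
    _ = 2 * |a| := mul_comm _ _

lemma Hh_lip (c : ℝ) {a b : ℝ} (hb : 0 ≤ b) (hba : b ≤ a) :
    |Hh c a - Hh c b| ≤ 2 * a * (a - b) := by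
  have hbound : ∀ s ∈ Set.Icc b a,
      ‖∫ u, pg u * (k1 (s * u + c) * u)‖ ≤ 2 * a := by
    intro s hs
    rw [Real.norm_eq_abs]
    refine (abs_deriv_Hh_le c s).trans ?_
    have : |s| ≤ a := by
      rw [abs_le]; exact ⟨by linarith [hs.1], hs.2⟩
    linarith
  have h := (convex_Icc b a).norm_image_sub_le_of_norm_hasDerivWithin_le
    (f' := fun s => ∫ u, pg u * (k1 (s * u + c) * u))
    (fun s _ => (hasDerivAt_Hh c s).hasDerivWithinAt) hbound
    (Set.left_mem_Icc.2 hba) (Set.right_mem_Icc.2 hba)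
  rw [Real.norm_eq_abs, Real.norm_eq_abs] at h
  refine h.trans ?_
  rw [abs_of_nonneg (by linarith : (0:ℝ) ≤ a - b)]

lemma Hh_sqrt_lip (c : ℝ) {p q : ℝ} (hq : 0 ≤ q) (hqp : q ≤ p) :
    |Hh c (Real.sqrt (2 * p)) - Hh c (Real.sqrt (2 * q))| ≤ 4 * (p - q) := by
  set a := Real.sqrt (2 * p) with ha
  set b := Real.sqrt (2 * q) with hbdef
  have hb : 0 ≤ b := Real.sqrt_nonneg _
  have hba : b ≤ a := Real.sqrt_le_sqrt (by linarith)
  have ha2 : a ^ 2 = 2 * p := Real.sq_sqrt (by linarith)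
  have hb2 : b ^ 2 = 2 * q := Real.sq_sqrt (by linarith)
  refine (Hh_lip c hb hba).trans ?_
  nlinarith [mul_nonneg (sub_nonneg.2 hba) hb]

lemma sqrt_two_mul_max (q : ℝ) : Real.sqrt (2 * q) = Real.sqrt (2 * max q 0) := by
  rcases le_total q 0 with h | h
  · rw [Real.sqrt_eq_zero_of_nonpos (by linarith), max_eq_right h, mul_zero, Real.sqrt_zero]
  · rw [max_eq_left h]

lemma Hh_q_lip (c q1 q2 : ℝ) :
    |Hh c (Real.sqrt (2 * q1)) - Hh c (Real.sqrt (2 * q2))| ≤ 4 * |q1 - q2| := by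
  rw [sqrt_two_mul_max q1, sqrt_two_mul_max q2]
  set p1 := max q1 0
  set p2 := max q2 0
  have hd : |p1 - p2| ≤ |q1 - q2| := abs_max_sub_max_le_abs q1 q2 0
  rcases le_total p2 p1 with h | h
  · refine (Hh_sqrt_lip c (le_max_right q2 0) h).trans ?_
    have : p1 - p2 ≤ |q1 - q2| := (le_abs_self _).trans hd
    linarith
  · rw [abs_sub_comm]
    refine (Hh_sqrt_lip c (le_max_right q1 0) h).trans ?_
    have : p2 - p1 ≤ |q1 - q2| := by
      refine (le_abs_self _).trans ?_
      rw [abs_sub_comm] at hd; exact hd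
    linarith

lemma Etanh2_eq (a x : ℝ) : Etanh2 a x = (Hh x a + Hh (-x) a) / 2 := by
  unfold Etanh2 Hh
  rw [integral_gauss_eq, integral_gauss_eq]
  have he : ∀ u : ℝ, a * u - x = a * u + -x := fun u => sub_eq_add_neg _ _
  simp only [he]

lemma Etanh2_q_lip (x q1 q2 : ℝ) :
    |Etanh2 (Real.sqrt (2 * q1)) x - Etanh2 (Real.sqrt (2 * q2)) x| ≤ 4 * |q1 - q2| := by
  rw [Etanh2_eq, Etanh2_eq]
  have h1 := Hh_q_lip x q1 q2
  have h2 := Hh_q_lip (-x) q1 q2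
  rw [abs_le] at h1 h2 ⊢
  constructor <;> linarith [h1.1, h1.2, h2.1, h2.2]

lemma Etanh2_nonneg (a x : ℝ) : 0 ≤ Etanh2 a x := by
  unfold Etanh2
  have h1 : 0 ≤ ∫ u, Real.tanh (a * u + x) ^ 2 ∂gauss :=
    integral_nonneg fun u => sq_nonneg _
  have h2 : 0 ≤ ∫ u, Real.tanh (a * u - x) ^ 2 ∂gauss :=
    integral_nonneg fun u => sq_nonneg _
  linarith

end UFP

/-- Unique fixed point for the bipartite model at high temperature (Remark 1.2 and the
fixed-point assertion of Theorem 1.5, with `β⋆ ≥ 1/(2√2)`, i.e. `t⋆ ≥ 1/16`): for every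
`t ∈ [0,1/16)`, `y ∈ [0,∞)²` and `x ∈ ℝ²` there is exactly one `z ∈ [0,∞)²` with
`zᵢ = E[tanh²(√(2(yᵢ + t z_{3−i})) η + xᵢ χ)]` for `i = 1,2`. -/
theorem unique_fixed_point_bipartite :
    ∀ t ∈ Set.Ico (0 : ℝ) (1 / 16), ∀ y : ℝ × ℝ, 0 ≤ y.1 → 0 ≤ y.2 → ∀ x : ℝ × ℝ,
      ∃! z : ℝ × ℝ, IsFPy t y x z := by
  rintro t ⟨ht0, ht1⟩ y _ _ x
  set F : ℝ × ℝ → ℝ × ℝ := fun z =>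
    (Etanh2 (Real.sqrt (2 * (y.1 + t * z.2))) x.1,
     Etanh2 (Real.sqrt (2 * (y.2 + t * z.1))) x.2) with hF
  have hdistF : ∀ z w : ℝ × ℝ, dist (F z) (F w) ≤ (1/4 : ℝ) * dist z w := by
    intro z w
    have hz2 : dist z.2 w.2 ≤ dist z w := by rw [Prod.dist_eq]; exact le_max_right _ _
    have hz1 : dist z.1 w.1 ≤ dist z w := by rw [Prod.dist_eq]; exact le_max_left _ _
    have hd : (0:ℝ) ≤ dist z w := dist_nonneg
    have c1 : dist (F z).1 (F w).1 ≤ (1/4 : ℝ) * dist z w := by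
      simp only [hF]
      rw [Real.dist_eq]
      refine (UFP.Etanh2_q_lip x.1 (y.1 + t * z.2) (y.1 + t * w.2)).trans ?_
      rw [show y.1 + t * z.2 - (y.1 + t * w.2) = t * (z.2 - w.2) by ring,
        abs_mul, abs_of_nonneg ht0]
      have h2 : |z.2 - w.2| ≤ dist z w := by rw [← Real.dist_eq]; exact hz2
      have ht : t ≤ 1/16 := le_of_lt ht1
      nlinarith [abs_nonneg (z.2 - w.2)]
    have c2 : dist (F z).2 (F w).2 ≤ (1/4 : ℝ) * dist z w := by
      simp only [hF]
      rw [Real.dist_eq]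
      refine (UFP.Etanh2_q_lip x.2 (y.2 + t * z.1) (y.2 + t * w.1)).trans ?_
      rw [show y.2 + t * z.1 - (y.2 + t * w.1) = t * (z.1 - w.1) by ring,
        abs_mul, abs_of_nonneg ht0]
      have h2 : |z.1 - w.1| ≤ dist z w := by rw [← Real.dist_eq]; exact hz1
      have ht : t ≤ 1/16 := le_of_lt ht1
      nlinarith [abs_nonneg (z.1 - w.1)]
    rw [Prod.dist_eq]
    exact max_le c1 c2
  have hcontr : ContractingWith (1/4 : NNReal) F := by
    constructor
    · rw [← NNReal.coe_lt_coe]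
      push_cast
      norm_num
    · refine LipschitzWith.of_dist_le_mul fun z w => ?_
      refine le_trans (hdistF z w) ?_
      apply mul_le_mul_of_nonneg_right _ dist_nonneg
      rw [NNReal.coe_div]
      norm_num
  have key : ∀ z : ℝ × ℝ, IsFPy t y x z ↔ F z = z := by
    intro z
    constructor
    · rintro ⟨_, _, h1, h2⟩
      simp only [hF]
      exact Prod.ext h1.symm h2.symm
    · intro h
      have h1 : z.1 = Etanh2 (Real.sqrt (2 * (y.1 + t * z.2))) x.1 := (congrArg Prod.fst h).symm
      have h2 : z.2 = Etanh2 (Real.sqrt (2 * (y.2 + t * z.1))) x.2 := (congrArg Prod.snd h).symm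
      exact ⟨h1 ▸ UFP.Etanh2_nonneg _ _, h2 ▸ UFP.Etanh2_nonneg _ _, h1, h2⟩
  refine ⟨ContractingWith.fixedPoint F hcontr, ?_, ?_⟩
  · exact (key _).2 hcontr.fixedPoint_isFixedPt
  · intro z hz
    exact hcontr.fixedPoint_unique ((key z).1 hz)
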